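/- arXiv:2601.09474 — 6 statements merged into one kernel-verified Lean document; each statement's English description precedes it below -/
import Mathlib

section
/- Let d ∈ ℕ, let H : ℝ^d → ℝ be continuous, let b : ℝ^d × ℝ → ℝ^d be continuous, and let λ : [0,1] → ℝ be continuous with λ(t) > 0 for all t ∈ [0,1]. Suppose J : ℝ^d × [0,1] → ℝ is continuously differentiable and satisfies the Hamilton–Jacobi–Bellman equation −∂_t J(x,t) − ⟨∇_x J(x,t), b(x,t)⟩ + ‖∇_x J(x,t)‖²/(2 λ(t)) = 0 for all x ∈ ℝ^d and t ∈ [0,1], together with the terminal condition J(x,1) = H(x) for all x. Let t₀ ∈ [0,1], let a : [t₀,1] → ℝ^d be continuous, and let X : [t₀,1] → ℝ^d be differentiable with X′(t) = b(X(t), t) + a(t) for all t ∈ [t₀,1]. Then J(X(t₀), t₀) ≤ H(X(1)) + ∫_{t₀}^{1} (λ(s)/2) ‖a(s)‖² ds. -/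
open scoped RealInnerProductSpace
open MeasureTheory Set

theorem hjb_verification_lower_bound
    (d : ℕ)
    (H : EuclideanSpace ℝ (Fin d) → ℝ) (hH : Continuous H)
    (b : EuclideanSpace ℝ (Fin d) × ℝ → EuclideanSpace ℝ (Fin d)) (hb : Continuous b)
    (lam : ℝ → ℝ) (hlamc : ContinuousOn lam (Icc 0 1))
    (hlam : ∀ t ∈ Icc (0:ℝ) 1, 0 < lam t)
    (J : EuclideanSpace ℝ (Fin d) × ℝ → ℝ) (hJ : ContDiff ℝ 1 J)
    (hHJB : ∀ x, ∀ t ∈ Icc (0:ℝ) 1,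
      -(deriv (fun τ => J (x, τ)) t)
        - ⟪gradient (fun y => J (y, t)) x, b (x, t)⟫
        + ‖gradient (fun y => J (y, t)) x‖ ^ 2 / (2 * lam t) = 0)
    (hterm : ∀ x, J (x, 1) = H x)
    (t₀ : ℝ) (ht₀ : t₀ ∈ Icc (0:ℝ) 1)
    (a : ℝ → EuclideanSpace ℝ (Fin d)) (ha : ContinuousOn a (Icc t₀ 1))
    (X : ℝ → EuclideanSpace ℝ (Fin d))
    (hX : ∀ t ∈ Icc t₀ 1, HasDerivAt X (b (X t, t) + a t) t) :
    J (X t₀, t₀) ≤ H (X 1) + ∫ s in t₀..1, lam s / 2 * ‖a s‖ ^ 2 := by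
  have hdJ : ∀ z, DifferentiableAt ℝ J z := fun z => (hJ.differentiable one_ne_zero) z
  -- fderiv decomposition into spatial gradient and time derivative
  have hdecomp : ∀ (x : EuclideanSpace ℝ (Fin d)) (t : ℝ) (v : EuclideanSpace ℝ (Fin d)) (s : ℝ),
      fderiv ℝ J (x, t) (v, s)
        = ⟪gradient (fun y => J (y, t)) x, v⟫ + s * deriv (fun τ => J (x, τ)) t := by
    intro x t v s
    set f := fderiv ℝ J (x, t) with hf
    have hfd : HasFDerivAt J f (x, t) := (hdJ _).hasFDerivAt
    have hx : HasFDerivAt (fun y : EuclideanSpace ℝ (Fin d) => J (y, t))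
        (f.comp (ContinuousLinearMap.inl ℝ (EuclideanSpace ℝ (Fin d)) ℝ)) x :=
      hfd.comp x (hasFDerivAt_prodMk_left x t)
    have hgrad : gradient (fun y : EuclideanSpace ℝ (Fin d) => J (y, t)) x
        = (InnerProductSpace.toDual ℝ (EuclideanSpace ℝ (Fin d))).symm (f.comp (ContinuousLinearMap.inl ℝ (EuclideanSpace ℝ (Fin d)) ℝ)) :=
      hx.hasGradientAt.gradient
    have ht : HasDerivAt (fun τ : ℝ => J (x, τ)) (f (0, 1)) t :=
      hfd.comp_hasDerivAt t ((hasDerivAt_const t x).prodMk (hasDerivAt_id t))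
    have hqt : deriv (fun τ : ℝ => J (x, τ)) t = f (0, 1) := ht.deriv
    have hsplit : (v, s) = (v, (0:ℝ)) + s • ((0:EuclideanSpace ℝ (Fin d)), (1:ℝ)) := by
      simp [Prod.ext_iff]
    rw [hgrad, InnerProductSpace.toDual_symm_apply, hqt, hsplit, map_add, _root_.map_smul]
    simp [f]
  have hsub : Icc t₀ 1 ⊆ Icc (0:ℝ) 1 := Icc_subset_Icc ht₀.1 le_rfl
  have hXc : ContinuousOn X (Icc t₀ 1) :=
    fun t ht => (hX t ht).continuousAt.continuousWithinAt
  -- the derivative of t ↦ J (X t, t)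
  set g' : ℝ → ℝ := fun t => fderiv ℝ J (X t, t) (b (X t, t) + a t, 1) with hg'
  have hderiv : ∀ t ∈ Icc t₀ 1, HasDerivAt (fun s => J (X s, s)) (g' t) t := by
    intro t ht
    have h1 : HasDerivAt (fun s : ℝ => (X s, s)) (b (X t, t) + a t, (1:ℝ)) t :=
      (hX t ht).prodMk (hasDerivAt_id t)
    have h2 : HasDerivAt (J ∘ fun s : ℝ => (X s, s)) (g' t) t :=
      HasFDerivAt.comp_hasDerivAt (f := fun s : ℝ => (X s, s)) t (hdJ (X t, t)).hasFDerivAt h1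
    exact h2
  -- pointwise formula and bound for g'
  have hbound : ∀ t ∈ Icc t₀ 1, -(lam t / 2 * ‖a t‖ ^ 2) ≤ g' t := by
    intro t ht
    have ht01 := hsub ht
    have hL := hlam t ht01
    set p := gradient (fun y => J (y, t)) (X t) with hp
    have hform : g' t = ⟪p, b (X t, t)⟫ + ⟪p, a t⟫ + deriv (fun τ => J (X t, τ)) t := by
      show (fderiv ℝ J (X t, t)) (b (X t, t) + a t, 1) = _
      rw [hdecomp (X t) t (b (X t, t) + a t) 1, inner_add_right]
      ring
    have hHJB' := hHJB (X t) t ht01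
    have hqt : deriv (fun τ => J (X t, τ)) t
        = ‖p‖ ^ 2 / (2 * lam t) - ⟪p, b (X t, t)⟫ := by
      rw [hp]; linarith [hHJB']
    rw [hform, hqt]
    have hinner : -(‖p‖ * ‖a t‖) ≤ ⟪p, a t⟫ :=
      neg_le_of_neg_le (by simpa using (neg_le_abs _).trans (abs_real_inner_le_norm p (a t)))
    have key : ‖p‖ * ‖a t‖ - lam t / 2 * ‖a t‖ ^ 2 ≤ ‖p‖ ^ 2 / (2 * lam t) := by
      rw [le_div_iff₀ (by positivity)]
      nlinarith [sq_nonneg (‖p‖ - lam t * ‖a t‖)]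
    linarith
  -- continuity of g' on [t₀, 1]
  have hg'c : ContinuousOn g' (Icc t₀ 1) := by
    have hFc : ContinuousOn (fun t => fderiv ℝ J (X t, t)) (Icc t₀ 1) :=
      (hJ.continuous_fderiv one_ne_zero).comp_continuousOn (hXc.prodMk continuousOn_id)
    have hvc : ContinuousOn (fun t => (b (X t, t) + a t, (1:ℝ))) (Icc t₀ 1) :=
      ((hb.comp_continuousOn (hXc.prodMk continuousOn_id)).add ha).prodMk continuousOn_const
    exact hFc.clm_apply hvc
  have huIcc : uIcc t₀ 1 = Icc t₀ 1 := uIcc_of_le ht₀.2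
  have hint1 : IntervalIntegrable g' volume t₀ 1 :=
    (huIcc ▸ hg'c).intervalIntegrable
  have hrc : ContinuousOn (fun s => lam s / 2 * ‖a s‖ ^ 2) (Icc t₀ 1) :=
    ((hlamc.mono hsub).div_const 2).mul ((ha.norm).pow 2)
  have hint2 : IntervalIntegrable (fun s => lam s / 2 * ‖a s‖ ^ 2) volume t₀ 1 :=
    (huIcc ▸ hrc).intervalIntegrable
  have hint2' : IntervalIntegrable (fun s => -(lam s / 2 * ‖a s‖ ^ 2)) volume t₀ 1 :=
    hint2.neg
  -- FTC
  have hFTC : ∫ s in t₀..1, g' s = J (X 1, 1) - J (X t₀, t₀) :=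
    intervalIntegral.integral_eq_sub_of_hasDerivAt
      (fun t ht => hderiv t (huIcc ▸ ht)) hint1
  have hmono : ∫ s in t₀..1, -(lam s / 2 * ‖a s‖ ^ 2) ≤ ∫ s in t₀..1, g' s :=
    intervalIntegral.integral_mono_on ht₀.2 hint2' hint1 hbound
  rw [intervalIntegral.integral_neg] at hmono
  have hterm' : J (X 1, 1) = H (X 1) := hterm (X 1)
  linarith
end

section
/- Let d ∈ ℕ and let b : ℝ^d × ℝ → ℝ^d. For each t ∈ [0,1] let Φ_t : ℝ^d → ℝ^d (the flow map of b from time t to time 1), such that (x,t) ↦ Φ_t(x) is continuously differentiable and satisfies the advection equation ∂_t Φ_t(x) + DΦ_t(x) b(x,t) = 0 for all x ∈ ℝ^d and t ∈ [0,1], where DΦ_t(x) is the spatial Jacobian matrix. Let λ : [0,1] → ℝ be continuous with λ(t) > 0, and set s(t) = ∫_t^1 λ(u)⁻¹ du. Let J : ℝ^d × [0,1] → ℝ be continuously differentiable and satisfy the Hamilton–Jacobi–Bellman equation −∂_t J(x,t) − ⟨∇_x J(x,t), b(x,t)⟩ + ‖∇_x J(x,t)‖²/(2λ(t)) = 0 for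 all x and t ∈ [0,1]. Let Ĵ : ℝ^d × ℝ → ℝ be continuously differentiable with J(x,t) = Ĵ(Φ_t(x), s(t)) for all x ∈ ℝ^d and t ∈ [0,1]. Then for all x ∈ ℝ^d and t ∈ [0,1]: (i) ∇_x J(x,t) = DΦ_t(x)ᵀ ∇_y Ĵ(Φ_t(x), s(t)); and (ii) ∂_s Ĵ(Φ_t(x), s(t)) + (1/2) ⟨∇_y Ĵ(Φ_t(x), s(t)), DΦ_t(x) DΦ_t(x)ᵀ ∇_y Ĵ(Φ_t(x), s(t))⟩ = 0. -/
open scoped RealInnerProductSpace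
open Set

lemma inner_gradient_eq_fderiv {F : Type*} [NormedAddCommGroup F] [InnerProductSpace ℝ F]
    [CompleteSpace F] (f : F → ℝ) (x v : F) :
    ⟪gradient f x, v⟫ = fderiv ℝ f x v := by
  rw [gradient]
  exact InnerProductSpace.toDual_symm_apply

set_option maxHeartbeats 1000000 in
theorem hjb_terminal_comoving_frame
    (d : ℕ)
    (b : EuclideanSpace ℝ (Fin d) × ℝ → EuclideanSpace ℝ (Fin d))
    (Φ : ℝ → EuclideanSpace ℝ (Fin d) → EuclideanSpace ℝ (Fin d))
    (hΦ : ContDiff ℝ 1 (fun q : EuclideanSpace ℝ (Fin d) × ℝ => Φ q.2 q.1))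
    (hadv : ∀ x, ∀ t ∈ Icc (0:ℝ) 1,
      deriv (fun τ => Φ τ x) t + fderiv ℝ (Φ t) x (b (x, t)) = 0)
    (lam : ℝ → ℝ) (hlamc : ContinuousOn lam (Icc 0 1))
    (hlam : ∀ t ∈ Icc (0:ℝ) 1, 0 < lam t)
    (s : ℝ → ℝ) (hs : ∀ t, s t = ∫ u in t..(1:ℝ), (lam u)⁻¹)
    (J : EuclideanSpace ℝ (Fin d) × ℝ → ℝ) (hJ : ContDiff ℝ 1 J)
    (hHJB : ∀ x, ∀ t ∈ Icc (0:ℝ) 1,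
      -(deriv (fun τ => J (x, τ)) t)
        - ⟪gradient (fun y => J (y, t)) x, b (x, t)⟫
        + ‖gradient (fun y => J (y, t)) x‖ ^ 2 / (2 * lam t) = 0)
    (Jh : EuclideanSpace ℝ (Fin d) × ℝ → ℝ) (hJh : ContDiff ℝ 1 Jh)
    (hcomp : ∀ x, ∀ t ∈ Icc (0:ℝ) 1, J (x, t) = Jh (Φ t x, s t)) :
    ∀ x, ∀ t ∈ Icc (0:ℝ) 1,
      gradient (fun y => J (y, t)) x
        = ContinuousLinearMap.adjoint (fderiv ℝ (Φ t) x)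
            (gradient (fun y => Jh (y, s t)) (Φ t x)) ∧
      deriv (fun τ => Jh (Φ t x, τ)) (s t)
        + 1 / 2 * ⟪gradient (fun y => Jh (y, s t)) (Φ t x),
            (fderiv ℝ (Φ t) x) (ContinuousLinearMap.adjoint (fderiv ℝ (Φ t) x)
              (gradient (fun y => Jh (y, s t)) (Φ t x)))⟫ = 0 := by
  intro x t ht

  have hΦdiff : Differentiable ℝ (fun q : EuclideanSpace ℝ (Fin d) × ℝ => Φ q.2 q.1) := hΦ.differentiable one_ne_zero
  have hJdiff : Differentiable ℝ J := hJ.differentiable one_ne_zero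
  have hJhdiff : Differentiable ℝ Jh := hJh.differentiable one_ne_zero
  have hΦt : Differentiable ℝ (Φ t) :=
    hΦdiff.comp (differentiable_id.prodMk (differentiable_const t))
  have hJht : Differentiable ℝ (fun y : EuclideanSpace ℝ (Fin d) => Jh (y, s t)) :=
    hJhdiff.comp (differentiable_id.prodMk (differentiable_const _))
  have hJt : Differentiable ℝ (fun y : EuclideanSpace ℝ (Fin d) => J (y, t)) :=
    hJdiff.comp (differentiable_id.prodMk (differentiable_const _))
  set A := fderiv ℝ (Φ t) x with hA
  set g := gradient (fun y : EuclideanSpace ℝ (Fin d) => Jh (y, s t)) (Φ t x) with hgdef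
  -- part (i)
  have hfun : (fun y : EuclideanSpace ℝ (Fin d) => J (y, t)) = fun y : EuclideanSpace ℝ (Fin d) => Jh (Φ t y, s t) :=
    funext fun y => hcomp y t ht
  have hchain : fderiv ℝ (fun y : EuclideanSpace ℝ (Fin d) => Jh (Φ t y, s t)) x
      = (fderiv ℝ (fun y : EuclideanSpace ℝ (Fin d) => Jh (y, s t)) (Φ t x)).comp A := by
    exact fderiv_comp x (hJht.differentiableAt) (hΦt.differentiableAt)
  have part1 : gradient (fun y : EuclideanSpace ℝ (Fin d) => J (y, t)) x = ContinuousLinearMap.adjoint A g := by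
    apply ext_inner_right ℝ
    intro v
    rw [inner_gradient_eq_fderiv, hfun, hchain, ContinuousLinearMap.comp_apply,
      ← inner_gradient_eq_fderiv, ← hgdef, ContinuousLinearMap.adjoint_inner_left]
  refine ⟨part1, ?_⟩
  -- part (ii)
  have hΦx : Differentiable ℝ (fun τ : ℝ => Φ τ x) :=
    hΦdiff.comp ((differentiable_const x).prodMk differentiable_id)
  haveI : Fact (t ∈ Icc (0:ℝ) 1) := ⟨ht⟩
  have hlaminv : ContinuousOn (fun u => (lam u)⁻¹) (Icc 0 1) :=
    hlamc.inv₀ fun u hu => (hlam u hu).ne'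
  have hsub : uIcc t 1 ⊆ Icc (0:ℝ) 1 := by
    rw [uIcc_of_le ht.2]
    exact Icc_subset_Icc ht.1 le_rfl
  have hint : IntervalIntegrable (fun u => (lam u)⁻¹) MeasureTheory.volume t 1 :=
    (hlaminv.mono hsub).intervalIntegrable
  have hmeas : StronglyMeasurableAtFilter (fun u => (lam u)⁻¹) (nhdsWithin t (Icc (0:ℝ) 1)) :=
    hlaminv.stronglyMeasurableAtFilter_nhdsWithin measurableSet_Icc t
  have hsfun : s = fun τ => ∫ u in τ..(1:ℝ), (lam u)⁻¹ := funext hs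
  have hsderiv : HasDerivWithinAt s (-(lam t)⁻¹) (Icc (0:ℝ) 1) t := by
    rw [hsfun]
    exact intervalIntegral.integral_hasDerivWithinAt_left hint hmeas
      ((hlaminv t ht).mono subset_rfl)
  have hΦ' : HasDerivAt (fun τ : ℝ => Φ τ x) (deriv (fun τ : ℝ => Φ τ x) t) t :=
    (hΦx t).hasDerivAt
  have hpair : HasDerivWithinAt (fun τ : ℝ => (Φ τ x, s τ))
      (deriv (fun τ : ℝ => Φ τ x) t, -(lam t)⁻¹) (Icc (0:ℝ) 1) t :=
    hΦ'.hasDerivWithinAt.prodMk hsderiv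
  set L := fderiv ℝ Jh (Φ t x, s t) with hL
  have hG : HasDerivWithinAt (fun τ => Jh (Φ τ x, s τ))
      (L (deriv (fun τ : ℝ => Φ τ x) t, -(lam t)⁻¹)) (Icc (0:ℝ) 1) t :=
    (hJhdiff _).hasFDerivAt.comp_hasDerivWithinAt t hpair
  have hud : UniqueDiffWithinAt ℝ (Icc (0:ℝ) 1) t := (uniqueDiffOn_Icc one_pos) t ht
  have hFt : DifferentiableAt ℝ (fun τ : ℝ => J (x, τ)) t :=
    (hJdiff.comp ((differentiable_const x).prodMk differentiable_id)) t
  have hFG : Set.EqOn (fun τ : ℝ => J (x, τ)) (fun τ => Jh (Φ τ x, s τ)) (Icc (0:ℝ) 1) :=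
    fun τ hτ => hcomp x τ hτ
  have key : deriv (fun τ : ℝ => J (x, τ)) t
      = L (deriv (fun τ : ℝ => Φ τ x) t, -(lam t)⁻¹) := by
    rw [← hFt.derivWithin hud, derivWithin_congr hFG (hcomp x t ht), hG.derivWithin hud]
  -- split L into partial derivatives
  have hpart1 : HasFDerivAt (fun z : EuclideanSpace ℝ (Fin d) => Jh (z, s t))
      (L.comp (ContinuousLinearMap.inl ℝ (EuclideanSpace ℝ (Fin d)) ℝ)) (Φ t x) :=
    (hJhdiff _).hasFDerivAt.comp _ (hasFDerivAt_prodMk_left _ _)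
  have hpart2 : HasDerivAt (fun τ : ℝ => Jh (Φ t x, τ)) (L ((0 : EuclideanSpace ℝ (Fin d)), (1:ℝ))) (s t) := by
    have h2 : HasDerivAt (fun τ : ℝ => ((Φ t x : EuclideanSpace ℝ (Fin d)), τ)) ((0 : EuclideanSpace ℝ (Fin d)), (1:ℝ)) (s t) :=
      (hasDerivAt_const _ _).prodMk (hasDerivAt_id _)
    exact (hJhdiff _).hasFDerivAt.comp_hasDerivAt _ h2
  have hderivs : deriv (fun τ : ℝ => Jh (Φ t x, τ)) (s t) = L ((0 : EuclideanSpace ℝ (Fin d)), (1:ℝ)) := hpart2.deriv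
  have hsplit : ∀ (v : EuclideanSpace ℝ (Fin d)) (c : ℝ), L (v, c) = L (v, 0) + c * L ((0 : EuclideanSpace ℝ (Fin d)), (1:ℝ)) := by
    intro v c
    have hvc : (v, c) = (v, (0:ℝ)) + c • (((0:EuclideanSpace ℝ (Fin d)), (1:ℝ))) := by
      simp [Prod.ext_iff]
    rw [hvc, map_add, map_smul, smul_eq_mul]
  have hL0 : ∀ v : EuclideanSpace ℝ (Fin d), L (v, 0) = ⟪g, v⟫ := by
    intro v
    rw [hgdef, inner_gradient_eq_fderiv, hpart1.fderiv]
    rfl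
  -- advection
  have hv : deriv (fun τ : ℝ => Φ τ x) t = -(A (b (x, t))) :=
    eq_neg_of_add_eq_zero_left (hadv x t ht)
  -- put it together
  set dS := deriv (fun τ : ℝ => Jh (Φ t x, τ)) (s t) with hdS
  have hkey2 : deriv (fun τ : ℝ => J (x, τ)) t
      = -⟪gradient (fun y : EuclideanSpace ℝ (Fin d) => J (y, t)) x, b (x, t)⟫ + (-(lam t)⁻¹) * dS := by
    rw [key, hsplit, hL0, hv, hderivs, part1]
    rw [inner_neg_right, ContinuousLinearMap.adjoint_inner_left]
  have hHJBt := hHJB x t ht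
  have hnorm : ‖gradient (fun y : EuclideanSpace ℝ (Fin d) => J (y, t)) x‖ ^ 2
      = ⟪g, A (ContinuousLinearMap.adjoint A g)⟫ := by
    rw [← real_inner_self_eq_norm_sq, part1, ContinuousLinearMap.adjoint_inner_left]
  have hlamt := hlam t ht
  rw [hkey2] at hHJBt
  rw [hnorm] at hHJBt
  have hl0 : lam t ≠ 0 := hlamt.ne'
  set N : ℝ := ⟪g, A (ContinuousLinearMap.adjoint A g)⟫ with hN
  set P : ℝ := ⟪gradient (fun y => J (y, t)) x, b (x, t)⟫ with hP
  field_simp at hHJBt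
  nlinarith [hHJBt]
end

section
/- Let σ > 0 and let λ : [0,1] → ℝ be continuous with λ(t) > 0 for all t ∈ [0,1]. Define v : [0,1] → ℝ by v(t) = sqrt((1−t)² + t²σ²) (so v(t) > 0 for all t), α(t) = v′(t)/v(t), and P : [0,1] → ℝ by P(t) = ( v(t)² ( σ⁻² + ∫_t^1 (λ(u) v(u)²)⁻¹ du ) )⁻¹. Then P is differentiable on [0,1], P(1) = 1, and P satisfies the Riccati equation −(1/2) P′(t) − α(t) P(t) + P(t)²/(2 λ(t)) = 0 for all t ∈ [0,1]. -/
open Set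

theorem riccati_explicit_solution
    (σ : ℝ) (hσ : 0 < σ)
    (lam : ℝ → ℝ) (hlamc : ContinuousOn lam (Icc 0 1))
    (hlam : ∀ t ∈ Icc (0:ℝ) 1, 0 < lam t)
    (v α P : ℝ → ℝ)
    (hv : ∀ t, v t = Real.sqrt ((1 - t) ^ 2 + t ^ 2 * σ ^ 2))
    (hα : ∀ t, α t = deriv v t / v t)
    (hP : ∀ t, P t = (v t ^ 2 * ((σ ^ 2)⁻¹ + ∫ u in t..(1:ℝ), (lam u * v u ^ 2)⁻¹))⁻¹) :
    P 1 = 1 ∧ DifferentiableOn ℝ P (Icc 0 1) ∧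
    ∀ t ∈ Icc (0:ℝ) 1,
      -(1 / 2) * derivWithin P (Icc 0 1) t - α t * P t + P t ^ 2 / (2 * lam t) = 0 := by
  have hw : ∀ t : ℝ, 0 < (1 - t) ^ 2 + t ^ 2 * σ ^ 2 := by
    intro t
    rcases eq_or_ne t 0 with rfl | ht
    · norm_num
    · have h1 : 0 < t ^ 2 * σ ^ 2 := by positivity
      nlinarith [sq_nonneg (1 - t)]
  have hvpos : ∀ t, 0 < v t := fun t => by
    rw [hv]; exact Real.sqrt_pos.mpr (hw t)
  have hvdiff : ∀ t : ℝ, DifferentiableAt ℝ v t := by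
    intro t
    have hveq : v = fun t => Real.sqrt ((1 - t) ^ 2 + t ^ 2 * σ ^ 2) := funext hv
    rw [hveq]
    have hwd : DifferentiableAt ℝ (fun t : ℝ => (1 - t) ^ 2 + t ^ 2 * σ ^ 2) t := by
      fun_prop
    exact (Real.hasDerivAt_sqrt (ne_of_gt (hw t))).differentiableAt.comp t hwd
  have hvd : ∀ t : ℝ, HasDerivAt v (deriv v t) t := fun t => (hvdiff t).hasDerivAt
  have hvcont : Continuous v := by
    have : Differentiable ℝ v := hvdiff
    exact this.continuous
  set f : ℝ → ℝ := fun u => (lam u * v u ^ 2)⁻¹ with hfdef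
  set g : ℝ → ℝ := fun t => (σ ^ 2)⁻¹ + ∫ u in t..(1:ℝ), f u with hgdef
  have hfc : ContinuousOn f (Icc 0 1) := by
    apply ContinuousOn.inv₀ (hlamc.mul ((hvcont.pow 2).continuousOn))
    intro u hu
    exact ne_of_gt (mul_pos (hlam u hu) (pow_pos (hvpos u) 2))
  have hInt : ∀ a ∈ Icc (0:ℝ) 1, ∀ b ∈ Icc (0:ℝ) 1,
      IntervalIntegrable f MeasureTheory.volume a b := fun a ha b hb =>
    (hfc.mono (uIcc_subset_Icc ha hb)).intervalIntegrable
  have hgpos : ∀ t ∈ Icc (0:ℝ) 1, 0 < g t := by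
    intro t ht
    have hint : 0 ≤ ∫ u in t..(1:ℝ), f u := by
      apply intervalIntegral.integral_nonneg ht.2
      intro u hu
      have hu' : u ∈ Icc (0:ℝ) 1 := ⟨le_trans ht.1 hu.1, hu.2⟩
      exact le_of_lt (inv_pos.mpr (mul_pos (hlam u hu') (pow_pos (hvpos u) 2)))
    have h2 : 0 < (σ ^ 2)⁻¹ := by positivity
    simp only [hgdef]
    linarith
  have hhne : ∀ t ∈ Icc (0:ℝ) 1, v t ^ 2 * g t ≠ 0 := fun t ht =>
    ne_of_gt (mul_pos (pow_pos (hvpos t) 2) (hgpos t ht))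
  have hgderiv : ∀ t ∈ Icc (0:ℝ) 1, HasDerivWithinAt g (-(f t)) (Icc 0 1) t := by
    intro t ht
    haveI : Fact (t ∈ Icc (0:ℝ) 1) := ⟨ht⟩
    have key : HasDerivWithinAt (fun x => ∫ u in (0:ℝ)..x, f u) (f t) (Icc 0 1) t :=
      intervalIntegral.integral_hasDerivWithinAt_right
        (hInt 0 (by norm_num) t ht)
        (hfc.stronglyMeasurableAtFilter_nhdsWithin measurableSet_Icc t)
        (hfc.continuousWithinAt ht)
    have key2 : HasDerivWithinAt
        (fun x => (σ ^ 2)⁻¹ + ((∫ u in (0:ℝ)..(1:ℝ), f u) - ∫ u in (0:ℝ)..x, f u))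
        (-(f t)) (Icc 0 1) t := by
      simpa using ((key.const_sub (∫ u in (0:ℝ)..(1:ℝ), f u)).const_add ((σ ^ 2)⁻¹))
    have heq : ∀ x ∈ Icc (0:ℝ) 1,
        g x = (σ ^ 2)⁻¹ + ((∫ u in (0:ℝ)..(1:ℝ), f u) - ∫ u in (0:ℝ)..x, f u) := by
      intro x hx
      have := intervalIntegral.integral_add_adjacent_intervals
        (hInt 0 (by norm_num) x hx) (hInt x hx 1 (by norm_num))
      simp only [hgdef]
      linarith
    exact key2.congr heq (heq t ht)
  have hhd : ∀ t ∈ Icc (0:ℝ) 1,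
      HasDerivWithinAt (fun x => v x ^ 2 * g x)
        (2 * v t * deriv v t * g t + v t ^ 2 * -(f t)) (Icc 0 1) t := by
    intro t ht
    have h1 : HasDerivWithinAt (fun x => v x ^ 2)
        ((2 : ℕ) * v t ^ (2 - 1) * deriv v t) (Icc 0 1) t :=
      ((hvd t).pow 2).hasDerivWithinAt
    have h2 : HasDerivWithinAt (fun x => v x ^ 2 * g x) _ (Icc 0 1) t := h1.mul (hgderiv t ht)
    convert h2 using 1
    norm_num
  have hPd : ∀ t ∈ Icc (0:ℝ) 1, HasDerivWithinAt P
      (-(2 * v t * deriv v t * g t + v t ^ 2 * -(f t)) / (v t ^ 2 * g t) ^ 2)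
      (Icc 0 1) t := by
    intro t ht
    have := (hhd t ht).inv (hhne t ht)
    exact this.congr (fun x _ => hP x) (hP t)
  refine ⟨?_, fun t ht => (hPd t ht).differentiableWithinAt, ?_⟩
  · have hv1 : v 1 = σ := by
      rw [hv]
      norm_num
      exact Real.sqrt_sq hσ.le
    rw [hP 1, hv1]
    simp only [hgdef, intervalIntegral.integral_same, add_zero]
    rw [mul_inv_cancel₀ (by positivity : (σ : ℝ) ^ 2 ≠ 0)]
    exact inv_one
  · intro t ht
    rw [(hPd t ht).derivWithin ((uniqueDiffOn_Icc one_pos) t ht), hα t, hP t]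
    have hV : v t ≠ 0 := ne_of_gt (hvpos t)
    have hG : g t ≠ 0 := ne_of_gt (hgpos t ht)
    have hL : lam t ≠ 0 := ne_of_gt (hlam t ht)
    have hfval : f t = (lam t * v t ^ 2)⁻¹ := rfl
    have hgt : ((σ ^ 2)⁻¹ + ∫ u in t..(1:ℝ), f u) = g t := rfl
    rw [hfval, hgt]
    set G := g t with hGt
    set V := v t with hVt
    set D := deriv v t with hDt
    set L := lam t with hLt
    field_simp
    ring
end

section
/- Let σ > 0 and let λ : [0,1] → ℝ be continuous with λ(t) > 0 for all t ∈ [0,1]. Define v(t) = sqrt((1−t)² + t²σ²), α(t) = v′(t)/v(t), γ = σ² ∫₀¹ (λ(t) v(t)²)⁻¹ dt, and P(t) = ( v(t)² ( σ⁻² + ∫_t^1 (λ(u) v(u)²)⁻¹ du ) )⁻¹. Then exp( ∫₀¹ ( α(t) − P(t)/λ(t) ) dt ) = σ / (1 + γ). -/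
open Set

theorem closed_loop_jacobian_formula
    (σ : ℝ) (hσ : 0 < σ)
    (lam : ℝ → ℝ) (hlamc : ContinuousOn lam (Icc 0 1))
    (hlam : ∀ t ∈ Icc (0:ℝ) 1, 0 < lam t)
    (v α P : ℝ → ℝ) (γ : ℝ)
    (hv : ∀ t, v t = Real.sqrt ((1 - t) ^ 2 + t ^ 2 * σ ^ 2))
    (hα : ∀ t, α t = deriv v t / v t)
    (hγ : γ = σ ^ 2 * ∫ t in (0:ℝ)..1, (lam t * v t ^ 2)⁻¹)
    (hP : ∀ t, P t = (v t ^ 2 * ((σ ^ 2)⁻¹ + ∫ u in t..(1:ℝ), (lam u * v u ^ 2)⁻¹))⁻¹) :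
    Real.exp (∫ t in (0:ℝ)..1, (α t - P t / lam t)) = σ / (1 + γ) := by
  -- the polynomial under the square root
  set q : ℝ → ℝ := fun t => (1 - t) ^ 2 + t ^ 2 * σ ^ 2 with hq_def
  have hq_pos : ∀ t, 0 < q t := by
    intro t
    rcases eq_or_ne t 0 with rfl | ht
    · simp [hq_def]
    · have h1 : 0 < t ^ 2 * σ ^ 2 := by positivity
      have h2 : 0 ≤ (1 - t) ^ 2 := sq_nonneg _
      simp only [hq_def]; linarith
  have hq_cont : Continuous q := by continuity
  have hv_eq : v = fun t => Real.sqrt (q t) := funext hv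
  have hv_pos : ∀ t, 0 < v t := fun t => by
    rw [hv t]; exact Real.sqrt_pos.2 (hq_pos t)
  have hv_cont : Continuous v := by
    rw [hv_eq]; exact Real.continuous_sqrt.comp hq_cont
  -- derivative of v
  set w : ℝ → ℝ := fun t => ((-2) * (1 - t) + 2 * t * σ ^ 2) * (1 / (2 * Real.sqrt (q t)))
    with hw_def
  have hq_deriv : ∀ t, HasDerivAt q ((-2) * (1 - t) + 2 * t * σ ^ 2) t := by
    intro t
    have h1 : HasDerivAt (fun s : ℝ => (1 - s) ^ 2) ((-2) * (1 - t)) t := by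
      have h := (((hasDerivAt_id t).const_sub 1).pow 2)
      exact h.congr_deriv (by simp)
    have h2 : HasDerivAt (fun s : ℝ => s ^ 2 * σ ^ 2) (2 * t * σ ^ 2) t := by
      have := (hasDerivAt_pow 2 t).mul_const (σ ^ 2)
      exact this.congr_deriv (by ring)
    exact h1.add h2
  have hv_deriv : ∀ t, HasDerivAt v (w t) t := by
    intro t
    rw [hv_eq]
    have := (Real.hasDerivAt_sqrt (hq_pos t).ne').comp t (hq_deriv t)
    exact this.congr_deriv (by simp only [hw_def]; ring)
  have hw_cont : Continuous w := by
    apply Continuous.mul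
    · fun_prop
    · apply Continuous.div continuous_const
      · exact continuous_const.mul (Real.continuous_sqrt.comp hq_cont)
      · intro t
        have := Real.sqrt_pos.2 (hq_pos t)
        positivity
  have hα_eq : ∀ t, α t = w t / v t := by
    intro t; rw [hα t, (hv_deriv t).deriv]
  -- the integrand of the Riccati-type integral
  set h : ℝ → ℝ := fun u => (lam u * v u ^ 2)⁻¹ with hh_def
  have hh_contOn : ContinuousOn h (Icc 0 1) := by
    apply ContinuousOn.inv₀
    · exact hlamc.mul (hv_cont.pow 2).continuousOn
    · intro t ht
      exact (mul_pos (hlam t ht) (pow_pos (hv_pos t) 2)).ne'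
  have hh_nonneg : ∀ u ∈ Icc (0:ℝ) 1, 0 ≤ h u := by
    intro u hu
    exact (inv_pos.2 (mul_pos (hlam u hu) (pow_pos (hv_pos u) 2))).le
  have hh_int : ∀ a ∈ Icc (0:ℝ) 1, ∀ b ∈ Icc (0:ℝ) 1, IntervalIntegrable h
      MeasureTheory.volume a b := by
    intro a ha b hb
    exact (hh_contOn.mono (uIcc_subset_Icc ha hb)).intervalIntegrable
  -- F and its properties
  set F : ℝ → ℝ := fun t => (σ ^ 2)⁻¹ + ∫ u in t..(1:ℝ), h u with hF_def
  have h01 : (0:ℝ) ∈ Icc (0:ℝ) 1 := by norm_num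
  have h11 : (1:ℝ) ∈ Icc (0:ℝ) 1 := by norm_num
  set G : ℝ → ℝ := fun t => ∫ u in (0:ℝ)..t, h u with hG_def
  have hFG : ∀ t ∈ Icc (0:ℝ) 1, F t = (σ ^ 2)⁻¹ + G 1 - G t := by
    intro t ht
    have := intervalIntegral.integral_add_adjacent_intervals
      (hh_int 0 h01 t ht) (hh_int t ht 1 h11)
    simp only [hF_def, hG_def]
    linarith
  have hF_pos : ∀ t ∈ Icc (0:ℝ) 1, 0 < F t := by
    intro t ht
    have hint : 0 ≤ ∫ u in t..(1:ℝ), h u := by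
      apply intervalIntegral.integral_nonneg ht.2
      intro u hu
      exact hh_nonneg u ⟨le_trans ht.1 hu.1, hu.2⟩
    have : 0 < (σ ^ 2)⁻¹ := by positivity
    simp only [hF_def]
    linarith
  have hG_contOn : ContinuousOn G (Icc 0 1) := by
    have : MeasureTheory.IntegrableOn h (uIcc (0:ℝ) 1) MeasureTheory.volume := by
      rw [uIcc_of_le zero_le_one]
      exact hh_contOn.integrableOn_Icc
    have := intervalIntegral.continuousOn_primitive_interval this
    rwa [uIcc_of_le zero_le_one] at this
  have hF_contOn : ContinuousOn F (Icc 0 1) := by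
    exact ContinuousOn.congr (continuousOn_const.sub hG_contOn) hFG
  -- derivative of F on the interior
  have hF_deriv : ∀ x ∈ Ioo (0:ℝ) 1, HasDerivAt F (-(h x)) x := by
    intro x hx
    have hmemnhds : Icc (0:ℝ) 1 ∈ nhds x := Icc_mem_nhds hx.1 hx.2
    have hmeas : StronglyMeasurableAtFilter h (nhds x) MeasureTheory.volume :=
      ⟨Icc 0 1, hmemnhds, hh_contOn.aestronglyMeasurable measurableSet_Icc⟩
    have hcontAt : ContinuousAt h x := hh_contOn.continuousAt hmemnhds
    have hG : HasDerivAt G (h x) x :=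
      intervalIntegral.integral_hasDerivAt_right
        (hh_int 0 h01 x ⟨hx.1.le, hx.2.le⟩) hmeas hcontAt
    have hrhs : HasDerivAt (fun t => (σ ^ 2)⁻¹ + G 1 - G t) (-(h x)) x :=
      hG.const_sub _
    apply hrhs.congr_of_eventuallyEq
    exact Filter.eventuallyEq_of_mem hmemnhds hFG
  -- the potential g
  set g : ℝ → ℝ := fun t => Real.log (v t) + Real.log (F t) with hg_def
  have hg_cont : ContinuousOn g (Icc 0 1) := by
    apply ContinuousOn.add
    · exact (hv_cont.continuousOn).log (fun t _ => (hv_pos t).ne')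
    · exact hF_contOn.log (fun t ht => (hF_pos t ht).ne')
  have hgderiv : ∀ x ∈ Ioo (0:ℝ) 1, HasDerivWithinAt g (α x - P x / lam x) (Ioi x) x := by
    intro x hx
    have hxI : x ∈ Icc (0:ℝ) 1 := ⟨hx.1.le, hx.2.le⟩
    have h1 : HasDerivAt (fun t => Real.log (v t)) (w x / v x) x :=
      (hv_deriv x).log (hv_pos x).ne'
    have h2 : HasDerivAt (fun t => Real.log (F t)) (-(h x) / F x) x :=
      (hF_deriv x hx).log (hF_pos x hxI).ne'
    have h3 : HasDerivAt g (w x / v x + -(h x) / F x) x := h1.add h2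
    have key : α x - P x / lam x = w x / v x + -(h x) / F x := by
      have hPx : P x = (v x ^ 2 * F x)⁻¹ := hP x
      have hlx : lam x ≠ 0 := (hlam x hxI).ne'
      have hvx : v x ≠ 0 := (hv_pos x).ne'
      have hFx : F x ≠ 0 := (hF_pos x hxI).ne'
      rw [hα_eq x, hPx, hh_def]
      field_simp
      ring
    rw [key]
    exact h3.hasDerivWithinAt
  -- integrability of the integrand
  have hint : IntervalIntegrable (fun t => α t - P t / lam t) MeasureTheory.volume 0 1 := by
    have hcont : ContinuousOn (fun t => α t - P t / lam t) (Icc 0 1) := by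
      apply ContinuousOn.sub
      · have : ContinuousOn (fun t => w t / v t) (Icc 0 1) :=
          (hw_cont.continuousOn).div (hv_cont.continuousOn) (fun t _ => (hv_pos t).ne')
        exact this.congr (fun t _ => hα_eq t)
      · apply ContinuousOn.div _ hlamc (fun t ht => (hlam t ht).ne')
        have : ContinuousOn (fun t => (v t ^ 2 * F t)⁻¹) (Icc 0 1) := by
          apply ContinuousOn.inv₀
          · exact ((hv_cont.pow 2).continuousOn).mul hF_contOn
          · intro t ht
            exact (mul_pos (pow_pos (hv_pos t) 2) (hF_pos t ht)).ne'
        exact this.congr (fun t _ => hP t)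
    apply ContinuousOn.intervalIntegrable
    rwa [uIcc_of_le (zero_le_one : (0:ℝ) ≤ 1)]
  -- the fundamental theorem of calculus
  have hmain : (∫ t in (0:ℝ)..1, (α t - P t / lam t)) = g 1 - g 0 :=
    intervalIntegral.integral_eq_sub_of_hasDeriv_right_of_le zero_le_one hg_cont hgderiv hint
  -- endpoint values
  have hv1 : v 1 = σ := by
    rw [hv 1]; norm_num; rw [Real.sqrt_sq hσ.le]
  have hv0 : v 0 = 1 := by
    rw [hv 0]; norm_num
  have hF1 : F 1 = (σ ^ 2)⁻¹ := by
    simp [hF_def]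
  have hI_nonneg : 0 ≤ ∫ u in (0:ℝ)..1, h u := by
    apply intervalIntegral.integral_nonneg zero_le_one
    exact hh_nonneg
  have hγ_nonneg : 0 ≤ γ := by
    rw [hγ]; positivity
  have hF0 : F 0 = (σ ^ 2)⁻¹ * (1 + γ) := by
    have : γ = σ ^ 2 * ∫ u in (0:ℝ)..1, h u := hγ
    simp only [hF_def]
    field_simp
    linarith [this]
  have h1γ : (0:ℝ) < 1 + γ := by linarith
  rw [hmain, hg_def]
  simp only [hv1, hv0, hF1, hF0, Real.log_one]
  rw [Real.exp_sub, Real.exp_add, Real.exp_add, Real.exp_log hσ,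
    Real.exp_log (by positivity : (0:ℝ) < (σ ^ 2)⁻¹),
    Real.exp_log (by positivity : (0:ℝ) < (σ ^ 2)⁻¹ * (1 + γ))]
  field_simp
  simp
end

section
/- Let σ > 0, μ ∈ ℝ, and let λ : [0,1] → ℝ be continuous with λ(t) > 0 for all t ∈ [0,1]. Define v(t) = sqrt((1−t)² + t²σ²), α(t) = v′(t)/v(t), β(t) = μ(1 − t α(t)), r(t) = −μ(v(t)/σ − t), γ = σ² ∫₀¹ (λ(t) v(t)²)⁻¹ dt, and P(t) = ( v(t)² ( σ⁻² + ∫_t^1 (λ(u) v(u)²)⁻¹ du ) )⁻¹. Let x : [0,1] → ℝ be differentiable with x(0) = 0 and x′(t) = ( α(t) − P(t)/λ(t) ) x(t) + β(t) + P(t) r(t)/λ(t) for all t ∈ [0,1]. Then x(1) = μ / (1 + γ). -/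
open Set

theorem optimal_terminal_mean
    (σ : ℝ) (hσ : 0 < σ) (μ : ℝ)
    (lam : ℝ → ℝ) (hlamc : ContinuousOn lam (Icc 0 1))
    (hlam : ∀ t ∈ Icc (0:ℝ) 1, 0 < lam t)
    (v α β r P : ℝ → ℝ) (γ : ℝ)
    (hv : ∀ t, v t = Real.sqrt ((1 - t) ^ 2 + t ^ 2 * σ ^ 2))
    (hα : ∀ t, α t = deriv v t / v t)
    (hβ : ∀ t, β t = μ * (1 - t * α t))
    (hr : ∀ t, r t = -μ * (v t / σ - t))
    (hγ : γ = σ ^ 2 * ∫ t in (0:ℝ)..1, (lam t * v t ^ 2)⁻¹)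
    (hP : ∀ t, P t = (v t ^ 2 * ((σ ^ 2)⁻¹ + ∫ u in t..(1:ℝ), (lam u * v u ^ 2)⁻¹))⁻¹)
    (x : ℝ → ℝ) (hx0 : x 0 = 0)
    (hx : ∀ t ∈ Icc (0:ℝ) 1,
      HasDerivAt x ((α t - P t / lam t) * x t + β t + P t * r t / lam t) t) :
    x 1 = μ / (1 + γ) := by
  have hσ' : σ ≠ 0 := ne_of_gt hσ
  -- positivity of the quadratic under the sqrt
  have hq : ∀ t : ℝ, 0 < (1 - t) ^ 2 + t ^ 2 * σ ^ 2 := by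
    intro t
    rcases eq_or_ne t 0 with rfl | ht
    · norm_num
    · have : 0 < t ^ 2 * σ ^ 2 := by positivity
      nlinarith [sq_nonneg (1 - t)]
  have hvpos : ∀ t, 0 < v t := by
    intro t; rw [hv t]; exact Real.sqrt_pos.mpr (hq t)
  have hvne : ∀ t, v t ≠ 0 := fun t => ne_of_gt (hvpos t)
  -- derivative of v
  have hvderiv : ∀ t : ℝ, HasDerivAt v ((-2 * (1 - t) + 2 * t * σ ^ 2) / (2 * v t)) t := by
    intro t
    have h1 : HasDerivAt (fun s : ℝ => (1 - s) ^ 2) (-2 * (1 - t)) t := by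
      have := ((hasDerivAt_id t).const_sub 1).pow 2
      refine this.congr_deriv ?_
      simp only [id_eq]
      norm_num
    have h2 : HasDerivAt (fun s : ℝ => s ^ 2 * σ ^ 2) (2 * t * σ ^ 2) t := by
      have := ((hasDerivAt_pow 2 t).mul_const (σ ^ 2))
      refine this.congr_deriv ?_
      norm_num
    have hq' : HasDerivAt (fun s : ℝ => (1 - s) ^ 2 + s ^ 2 * σ ^ 2)
        (-2 * (1 - t) + 2 * t * σ ^ 2) t := h1.add h2
    have hsq := hq'.sqrt (ne_of_gt (hq t))
    have hveq : v = fun s => Real.sqrt ((1 - s) ^ 2 + s ^ 2 * σ ^ 2) := funext hv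
    rw [hveq]
    exact hsq
  have hvcont : Continuous v := by
    have : Differentiable ℝ v := fun t => (hvderiv t).differentiableAt
    exact this.continuous
  -- extended lambda
  set lamext : ℝ → ℝ := fun t => lam ((projIcc (0:ℝ) 1 zero_le_one t : Icc (0:ℝ) 1) : ℝ) with hlamext
  have hlamext_eq : ∀ t ∈ Icc (0:ℝ) 1, lamext t = lam t := by
    intro t ht
    simp [hlamext, projIcc_of_mem zero_le_one ht]
  have hlamext_pos : ∀ t, 0 < lamext t :=
    fun t => hlam _ (projIcc (0:ℝ) 1 zero_le_one t).2
  have hlamext_cont : Continuous lamext := by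
    apply hlamc.comp_continuous
    · exact continuous_subtype_val.comp continuous_projIcc
    · exact fun t => (projIcc (0:ℝ) 1 zero_le_one t).2
  -- the integrand
  set f : ℝ → ℝ := fun u => (lamext u * v u ^ 2)⁻¹ with hf
  have hfpos : ∀ u, 0 < f u := fun u => by
    have := hlamext_pos u; have := hvpos u; positivity
  have hfcont : Continuous f := by
    apply Continuous.inv₀ (hlamext_cont.mul (hvcont.pow 2))
    intro u
    exact (show 0 < lamext u * v u ^ 2 by have := hlamext_pos u; have := hvpos u; positivity).ne'
  -- f agrees with original integrand on [0,1]
  have hint_eq : ∀ t ∈ Icc (0:ℝ) 1,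
      (∫ u in t..(1:ℝ), (lam u * v u ^ 2)⁻¹) = ∫ u in t..(1:ℝ), f u := by
    intro t ht
    apply intervalIntegral.integral_congr
    intro u hu
    have hu' : u ∈ Icc (0:ℝ) 1 := by
      rcases hu with ⟨h1, h2⟩
      constructor
      · exact le_trans (le_min ht.1 (by norm_num)) h1
      · exact le_trans h2 (max_le ht.2 le_rfl)
    rw [hf]; simp only
    rw [hlamext_eq u hu']
  -- the tilted integral and h
  set h : ℝ → ℝ := fun t => (σ ^ 2)⁻¹ + ∫ u in t..(1:ℝ), f u with hh
  have hhderiv : ∀ t : ℝ, HasDerivAt h (-f t) t := by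
    intro t
    have hInt : IntervalIntegrable f MeasureTheory.volume t 1 :=
      hfcont.intervalIntegrable t 1
    have := intervalIntegral.integral_hasDerivAt_left hInt
      (hfcont.stronglyMeasurable.stronglyMeasurableAtFilter) hfcont.continuousAt
    simpa [hh] using this
  have hhpos : ∀ t ∈ Icc (0:ℝ) 1, 0 < h t := by
    intro t ht
    have hnn : 0 ≤ ∫ u in t..(1:ℝ), f u :=
      intervalIntegral.integral_nonneg ht.2 (fun u _ => le_of_lt (hfpos u))
    have : 0 < (σ ^ 2)⁻¹ := by positivity
    rw [hh]; dsimp only; linarith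
  -- P in terms of h
  have hPh : ∀ t ∈ Icc (0:ℝ) 1, P t = (v t ^ 2 * h t)⁻¹ := by
    intro t ht
    rw [hP t, hint_eq t ht, hh]
  -- the conserved quantity G
  set G : ℝ → ℝ := fun t => (x t - μ * t + μ / σ * v t) / (v t * h t) with hG
  have hGderiv : ∀ t ∈ Icc (0:ℝ) 1, HasDerivAt G 0 t := by
    intro t ht
    have hN : HasDerivAt (fun s => x s - μ * s + μ / σ * v s)
        (((α t - P t / lam t) * x t + β t + P t * r t / lam t) - μ
          + μ / σ * ((-2 * (1 - t) + 2 * t * σ ^ 2) / (2 * v t))) t := by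
      have := ((hx t ht).sub ((hasDerivAt_id t).const_mul μ)).add
        ((hvderiv t).const_mul (μ / σ))
      simp only [id_eq, mul_one] at this
      exact this
    have hD : HasDerivAt (fun s => v s * h s)
        (((-2 * (1 - t) + 2 * t * σ ^ 2) / (2 * v t)) * h t + v t * -f t) t :=
      (hvderiv t).mul (hhderiv t)
    have hDne : v t * h t ≠ 0 :=
      mul_ne_zero (hvne t) (ne_of_gt (hhpos t ht))
    have hdiv := hN.div hD hDne
    rw [hG]
    refine hdiv.congr_deriv ?_
    symm
    rw [hβ t, hr t, hα t, hPh t ht, (hvderiv t).deriv]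
    have hlne : lam t ≠ 0 := ne_of_gt (hlam t ht)
    have hhne : h t ≠ 0 := ne_of_gt (hhpos t ht)
    have hfval : f t = (lam t * v t ^ 2)⁻¹ := by
      rw [hf]; dsimp only; rw [hlamext_eq t ht]
    rw [hfval, eq_div_iff (pow_ne_zero 2 hDne), zero_mul]
    obtain ⟨H, hHne, hHdef⟩ : ∃ H, H ≠ 0 ∧ h t = H := ⟨h t, hhne, rfl⟩
    rw [hHdef]
    obtain ⟨V, hVne, hVdef⟩ : ∃ V, V ≠ 0 ∧ v t = V := ⟨v t, hvne t, rfl⟩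
    rw [hVdef]
    field_simp
    ring
  have hGcont : ContinuousOn G (Icc 0 1) :=
    fun t ht => ((hGderiv t ht).continuousAt).continuousWithinAt
  have hconst := constant_of_has_deriv_right_zero hGcont
    (fun t ht => ((hGderiv t (Ico_subset_Icc_self ht)).hasDerivWithinAt))
  have hG10 : G 1 = G 0 := hconst 1 (by norm_num)
  -- evaluate endpoints
  have hv0 : v 0 = 1 := by rw [hv 0]; norm_num
  have hv1 : v 1 = σ := by
    rw [hv 1]; simp [Real.sqrt_sq hσ.le]
  have hh1 : h 1 = (σ ^ 2)⁻¹ := by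
    rw [hh]; simp
  have hγ' : γ = σ ^ 2 * ∫ u in (0:ℝ)..1, f u := by
    rw [hγ, hint_eq 0 (by norm_num)]
  have hh0 : h 0 = (1 + γ) / σ ^ 2 := by
    rw [hh, hγ']; dsimp only; field_simp
  have hγnn : 0 ≤ γ := by
    rw [hγ']
    have : 0 ≤ ∫ u in (0:ℝ)..1, f u :=
      intervalIntegral.integral_nonneg (by norm_num) (fun u _ => le_of_lt (hfpos u))
    positivity
  have h1γ : (1 : ℝ) + γ ≠ 0 := by linarith
  have hG1 : G 1 = x 1 * σ := by
    rw [hG]; dsimp only; rw [hv1, hh1]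
    field_simp
    ring
  have hG0 : G 0 = μ * σ / (1 + γ) := by
    rw [hG]; dsimp only; rw [hx0, hv0, hh0]
    field_simp
    ring
  have hkey : x 1 * σ = μ * σ / (1 + γ) := by rw [← hG1, hG10, hG0]
  rw [eq_div_iff h1γ]
  have h2 : (x 1 * (1 + γ)) * σ = μ * σ := by
    rw [eq_div_iff h1γ] at hkey
    linear_combination hkey
  exact mul_right_cancel₀ hσ' h2
end

section
/- Let σ > 0 and let λ : [0,1] → ℝ be continuous with λ(t) > 0 for all t ∈ [0,1]. Define v(t) = sqrt((1−t)² + t²σ²), α(t) = v′(t)/v(t), γ = σ² ∫₀¹ (λ(t) v(t)²)⁻¹ dt, and P(t) = ( v(t)² ( σ⁻² + ∫_t^1 (λ(u) v(u)²)⁻¹ du ) )⁻¹. Let V : [0,1] → ℝ be differentiable with V(0) = 1 and V′(t) = 2 ( α(t) − P(t)/λ(t) ) V(t) for all t ∈ [0,1]. Then V(1) = σ² / (1 + γ)². -/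
open Set

set_option maxHeartbeats 1000000 in
theorem optimal_terminal_variance
    (σ : ℝ) (hσ : 0 < σ)
    (lam : ℝ → ℝ) (hlamc : ContinuousOn lam (Icc 0 1))
    (hlam : ∀ t ∈ Icc (0:ℝ) 1, 0 < lam t)
    (v α P : ℝ → ℝ) (γ : ℝ)
    (hv : ∀ t, v t = Real.sqrt ((1 - t) ^ 2 + t ^ 2 * σ ^ 2))
    (hα : ∀ t, α t = deriv v t / v t)
    (hγ : γ = σ ^ 2 * ∫ t in (0:ℝ)..1, (lam t * v t ^ 2)⁻¹)
    (hP : ∀ t, P t = (v t ^ 2 * ((σ ^ 2)⁻¹ + ∫ u in t..(1:ℝ), (lam u * v u ^ 2)⁻¹))⁻¹)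
    (V : ℝ → ℝ) (hV0 : V 0 = 1)
    (hV : ∀ t ∈ Icc (0:ℝ) 1, HasDerivAt V (2 * (α t - P t / lam t) * V t) t) :
    V 1 = σ ^ 2 / (1 + γ) ^ 2 := by
  -- positivity of the quadratic under the square root
  have hq : ∀ t : ℝ, 0 < (1 - t) ^ 2 + t ^ 2 * σ ^ 2 := by
    intro t
    rcases eq_or_ne t 1 with rfl | ht
    · simpa using by positivity
    · have h1 : 0 < (1 - t) ^ 2 := by
        have : (1 : ℝ) - t ≠ 0 := sub_ne_zero.2 (Ne.symm ht)
        positivity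
      nlinarith [sq_nonneg t, sq_nonneg σ, mul_nonneg (sq_nonneg t) (sq_nonneg σ)]
  have hvpos : ∀ t, 0 < v t := by
    intro t; rw [hv]; exact Real.sqrt_pos.2 (hq t)
  -- derivative of v
  have hvd : ∀ t : ℝ, HasDerivAt v
      ((2 * (1 - t) * (-1) + 2 * t * σ ^ 2) / (2 * v t)) t := by
    intro t
    have hqd : HasDerivAt (fun t : ℝ => (1 - t) ^ 2 + t ^ 2 * σ ^ 2)
        (2 * (1 - t) * (-1) + 2 * t * σ ^ 2) t := by
      have h1 : HasDerivAt (fun t : ℝ => (1 - t) ^ 2)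
          ((2 : ℕ) * (1 - t) ^ 1 * (-1)) t :=
        (((hasDerivAt_id t).const_sub 1).pow 2)
      have h2 : HasDerivAt (fun t : ℝ => t ^ 2 * σ ^ 2)
          (((2 : ℕ) * t ^ 1 * 1) * σ ^ 2) t :=
        ((hasDerivAt_id t).pow 2).mul_const _
      exact (h1.add h2).congr_deriv (by push_cast; ring)
    have hsq : HasDerivAt Real.sqrt (1 / (2 * Real.sqrt ((1 - t) ^ 2 + t ^ 2 * σ ^ 2)))
        ((1 - t) ^ 2 + t ^ 2 * σ ^ 2) := Real.hasDerivAt_sqrt (ne_of_gt (hq t))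
    have := hsq.comp t hqd
    have hvv : v = fun t => Real.sqrt ((1 - t) ^ 2 + t ^ 2 * σ ^ 2) := funext hv
    rw [hvv]
    simpa [hv, Function.comp_def, div_eq_mul_inv, mul_comm, mul_left_comm, mul_assoc] using this
  have hvcont : Continuous v := by
    have : Continuous fun t : ℝ => Real.sqrt ((1 - t) ^ 2 + t ^ 2 * σ ^ 2) := by
      continuity
    simpa [funext hv] using this
  -- projection onto [0,1]
  set proj : ℝ → ℝ := fun t => max 0 (min 1 t) with hproj
  have hprojmem : ∀ t, proj t ∈ Icc (0:ℝ) 1 := fun t =>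
    ⟨le_max_left _ _, max_le zero_le_one (min_le_left 1 t)⟩
  have hprojcont : Continuous proj :=
    continuous_const.max (continuous_const.min continuous_id)
  have hprojeq : ∀ t ∈ Icc (0:ℝ) 1, proj t = t := by
    intro t ht
    simp [hproj, max_eq_right, min_eq_right ht.2, max_eq_right ht.1]
  -- the regularized integrand
  set fbar : ℝ → ℝ := fun u => (lam (proj u) * v (proj u) ^ 2)⁻¹ with hfbar
  have hfbarpos : ∀ u, 0 < fbar u := by
    intro u
    have h1 := hlam _ (hprojmem u)
    have h2 := hvpos (proj u)
    positivity
  have hfbarcont : Continuous fbar := by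
    apply Continuous.inv₀
    · exact (hlamc.comp_continuous hprojcont hprojmem).mul
        ((hvcont.comp hprojcont).pow 2)
    · intro u; exact ne_of_gt (by have := hlam _ (hprojmem u); have := hvpos (proj u); positivity)
  have hfbareq : ∀ u ∈ Icc (0:ℝ) 1, fbar u = (lam u * v u ^ 2)⁻¹ := by
    intro u hu; simp [hfbar, hprojeq u hu]
  set J : ℝ → ℝ := fun t => ∫ u in t..(1:ℝ), fbar u with hJ
  have hJd : ∀ t : ℝ, HasDerivAt J (-(fbar t)) t := by
    intro t
    exact intervalIntegral.integral_hasDerivAt_left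
      (hfbarcont.intervalIntegrable _ _)
      (hfbarcont.stronglyMeasurableAtFilter _ _)
      hfbarcont.continuousAt
  have hJeq : ∀ t ∈ Icc (0:ℝ) 1, J t = ∫ u in t..(1:ℝ), (lam u * v u ^ 2)⁻¹ := by
    intro t ht
    apply intervalIntegral.integral_congr
    intro u hu
    apply hfbareq
    have : uIcc t 1 ⊆ Icc (0:ℝ) 1 := by
      rw [uIcc_of_le ht.2]
      exact Icc_subset_Icc ht.1 le_rfl
    exact this hu
  have hJnonneg : ∀ t : ℝ, t ≤ 1 → 0 ≤ J t := by
    intro t ht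
    exact intervalIntegral.integral_nonneg ht (fun u _ => (hfbarpos u).le)
  set c : ℝ := (σ ^ 2)⁻¹ with hc
  have hcpos : 0 < c := by positivity
  have hJ0 : 0 < c + J 0 := by
    have := hJnonneg 0 (by norm_num); linarith
  set C : ℝ := ((c + J 0) ^ 2)⁻¹ with hC
  set W : ℝ → ℝ := fun t => C * (v t ^ 2 * (c + J t) ^ 2) with hW
  have hWpos : ∀ t ∈ Icc (0:ℝ) 1, 0 < W t := by
    intro t ht
    have h1 := hvpos t
    have h2 : 0 < c + J t := by have := hJnonneg t ht.2; linarith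
    have h3 : 0 < C := by positivity
    positivity
  -- derivative of W
  have hWd : ∀ t : ℝ, HasDerivAt W
      (C * (2 * v t * ((2 * (1 - t) * (-1) + 2 * t * σ ^ 2) / (2 * v t)) * (c + J t) ^ 2
        + v t ^ 2 * (2 * (c + J t) * (-(fbar t))))) t := by
    intro t
    have h1 : HasDerivAt (fun t => v t ^ 2)
        ((2:ℕ) * v t ^ 1 * ((2 * (1 - t) * (-1) + 2 * t * σ ^ 2) / (2 * v t))) t :=
      (hvd t).pow 2
    have h2 : HasDerivAt (fun t => (c + J t) ^ 2)
        ((2:ℕ) * (c + J t) ^ 1 * (-(fbar t))) t :=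
      (((hJd t).const_add c).pow 2)
    have := (h1.mul h2).const_mul C
    exact this.congr_deriv (by push_cast; ring)
  -- W satisfies the same ODE as V on [0,1]
  have hkey : ∀ t ∈ Icc (0:ℝ) 1, HasDerivAt W (2 * (α t - P t / lam t) * W t) t := by
    intro t ht
    have h := hWd t
    convert h using 1
    have hvt := hvpos t
    have hlt := hlam t ht
    have hJt : 0 < c + J t := by have := hJnonneg t ht.2; linarith
    have hPt : P t = (v t ^ 2 * (c + J t))⁻¹ := by
      rw [hP t, ← hJeq t ht, hc]
    have hαt : α t = ((2 * (1 - t) * (-1) + 2 * t * σ ^ 2) / (2 * v t)) / v t := by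
      rw [hα t, (hvd t).deriv]
    have hfbt : fbar t = (lam t * v t ^ 2)⁻¹ := hfbareq t ht
    rw [hαt, hPt, hfbt, hW]
    field_simp
    ring
  -- ratio V/W is constant on [0,1]
  set h : ℝ → ℝ := fun t => V t * (W t)⁻¹ with hh
  have hWcont : Continuous W := by
    exact Differentiable.continuous (fun t => (hWd t).differentiableAt)
  have hVcont : ContinuousOn V (Icc 0 1) := by
    intro t ht
    exact ((hV t ht).continuousAt).continuousWithinAt
  have hcont : ContinuousOn h (Icc 0 1) := by
    apply hVcont.mul
    exact (hWcont.continuousOn.inv₀ (fun t ht => ne_of_gt (hWpos t ht)))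
  have hderiv : ∀ t ∈ Ico (0:ℝ) 1, HasDerivWithinAt h 0 (Ici t) t := by
    intro t ht
    have ht' : t ∈ Icc (0:ℝ) 1 := ⟨ht.1, ht.2.le⟩
    have hWne : W t ≠ 0 := ne_of_gt (hWpos t ht')
    have hd : HasDerivAt h
        (2 * (α t - P t / lam t) * V t * (W t)⁻¹
          + V t * (-(2 * (α t - P t / lam t) * W t) / (W t) ^ 2)) t :=
      (hV t ht').mul ((hkey t ht').inv hWne)
    have : (2 * (α t - P t / lam t) * V t * (W t)⁻¹
          + V t * (-(2 * (α t - P t / lam t) * W t) / (W t) ^ 2)) = 0 := by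
      field_simp
      ring
    rw [this] at hd
    exact hd.hasDerivWithinAt
  have hconst := constant_of_has_deriv_right_zero hcont hderiv 1 (by norm_num)
  -- evaluate
  have hv0 : v 0 = 1 := by rw [hv]; norm_num
  have hv1 : v 1 = σ := by
    rw [hv]; norm_num; exact Real.sqrt_sq hσ.le
  have hJ1 : J 1 = 0 := by simp [hJ]
  have hW0 : W 0 = 1 := by
    show C * (v 0 ^ 2 * (c + J 0) ^ 2) = 1
    rw [hv0, hC, one_pow, one_mul]
    exact inv_mul_cancel₀ (pow_ne_zero 2 (ne_of_gt hJ0))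
  have hW1 : W 1 = σ ^ 2 * c ^ 2 / (c + J 0) ^ 2 := by
    show C * (v 1 ^ 2 * (c + J 1) ^ 2) = _
    rw [hv1, hJ1, hC, add_zero, div_eq_mul_inv]
    ring
  have h0 : h 0 = 1 := by
    show V 0 * (W 0)⁻¹ = 1
    rw [hV0, hW0]; norm_num
  have h1 : h 1 = 1 := by rw [hconst]; exact h0
  have hW1ne : W 1 ≠ 0 := ne_of_gt (hWpos 1 (by norm_num))
  have hV1 : V 1 = W 1 := by
    have h1' : V 1 * (W 1)⁻¹ = 1 := h1
    calc V 1 = V 1 * (W 1)⁻¹ * W 1 := by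
            rw [mul_assoc, inv_mul_cancel₀ hW1ne, mul_one]
      _ = W 1 := by rw [h1', one_mul]
  rw [hV1, hW1]
  have hγ' : γ = σ ^ 2 * J 0 := by
    rw [hγ, hJeq 0 (by norm_num)]
  rw [hγ', hc]
  have hσ2 : (σ:ℝ) ^ 2 ≠ 0 := by positivity
  field_simp
end
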